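/- Let (Ω, Σ, P) be a probability space, let k be a positive integer, let f : (a,b) → ℝ be a 2k-times differentiable function with f^(2k)(x) ≥ 0 for every x ∈ (a,b), where 0 ∈ (a,b), and let X : Ω → (a,b) be an integrable random variable with E[X] = 0 such that f(X), X^i, and f^(i)(X)·X^i are integrable for 1 ≤ i ≤ 2k−1. Then ∑_{i=1}^{2k−1} (1/i!) · f^(i)(0) · E[X^i] ≤ E[f(X)] − f(0) ≤ −∑_{i=1}^{2k−1} ((−1)^i / i!) · E[f^(i)(X)·X^i]. -/

import Mathlib

open MeasureTheory ProbabilityTheory Finset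

lemma jg_iter_eq {n : ℕ} {fd : ℕ → ℝ → ℝ} {s u : Set ℝ} (hu : UniqueDiffOn ℝ u) (hus : u ⊆ s)
    (hderiv : ∀ i < n, ∀ x ∈ s, HasDerivAt (fd i) (fd (i + 1) x) x) :
    ∀ i ≤ n, Set.EqOn (iteratedDerivWithin i (fd 0) u) (fd i) u := by
  intro i
  induction i with
  | zero => intro _ x hx; simp
  | succ i ih =>
    intro hi x hx
    rw [iteratedDerivWithin_succ,
      derivWithin_congr (ih (by omega)) (ih (by omega) hx)]
    exact ((hderiv i (by omega) x (hus hx)).hasDerivWithinAt).derivWithin (hu x hx)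

lemma jg_contdiff {n : ℕ} {fd : ℕ → ℝ → ℝ} {s : Set ℝ} (hs : IsOpen s)
    (hderiv : ∀ i < n, ∀ x ∈ s, HasDerivAt (fd i) (fd (i + 1) x) x) :
    ∀ m i, i + m < n → ContDiffOn ℝ m (fd i) s := by
  intro m
  induction m with
  | zero =>
    intro i h
    exact contDiffOn_zero.mpr fun x hx =>
      ((hderiv i (by omega) x hx).continuousAt).continuousWithinAt
  | succ m ih =>
    intro i h
    have : ((m + 1 : ℕ) : WithTop ℕ∞) = (m : WithTop ℕ∞) + 1 := by push_cast; ring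
    rw [this, contDiffOn_succ_iff_deriv_of_isOpen hs]
    refine ⟨fun x hx => (hderiv i (by omega) x hx).differentiableAt.differentiableWithinAt,
      by simp, ?_⟩
    exact (ih (i + 1) (by omega)).congr fun x hx => ((hderiv i (by omega) x hx).deriv)

lemma jg_taylor_lb_of_lt {n : ℕ} (hn : 0 < n) {fd : ℕ → ℝ → ℝ} {s : Set ℝ} (hs : IsOpen s)
    (hderiv : ∀ i < n, ∀ x ∈ s, HasDerivAt (fd i) (fd (i + 1) x) x)
    (hnonneg : ∀ x ∈ s, 0 ≤ fd n x)
    {x₀ x : ℝ} (hx : x₀ < x) (hsub : Set.Icc x₀ x ⊆ s) :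
    ∑ i ∈ range n, (x - x₀) ^ i / (Nat.factorial i : ℝ) * fd i x₀ ≤ fd 0 x := by
  obtain ⟨m, rfl⟩ : ∃ m, n = m + 1 := ⟨n - 1, by omega⟩
  have hu : UniqueDiffOn ℝ (Set.Icc x₀ x) := uniqueDiffOn_Icc hx
  have heq := jg_iter_eq hu hsub hderiv
  have hf : ContDiffOn ℝ m (fd 0) (Set.Icc x₀ x) :=
    (jg_contdiff hs hderiv m 0 (by omega)).mono hsub
  have hf' : DifferentiableOn ℝ (iteratedDerivWithin m (fd 0) (Set.Icc x₀ x)) (Set.Ioo x₀ x) := by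
    refine DifferentiableOn.congr (fun y hy =>
      ((hderiv m (by omega) y (hsub (Set.Ioo_subset_Icc_self hy))).differentiableAt).differentiableWithinAt) ?_
    exact fun y hy => heq m (by omega) (Set.Ioo_subset_Icc_self hy)
  obtain ⟨x', hx', hrem⟩ := taylor_mean_remainder_lagrange (f := fd 0) (n := m) hx.ne
    (by rwa [Set.uIcc_of_le hx.le]) (by rwa [Set.uIcc_of_le hx.le, Set.uIoo_of_le hx.le])
  rw [Set.uIcc_of_le hx.le] at hrem
  rw [Set.uIoo_of_le hx.le] at hx'
  have h1 : taylorWithinEval (fd 0) m (Set.Icc x₀ x) x₀ x =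
      ∑ i ∈ range (m + 1), (x - x₀) ^ i / (Nat.factorial i : ℝ) * fd i x₀ := by
    rw [taylor_within_apply]
    refine Finset.sum_congr rfl fun i hi => ?_
    rw [heq i (by simp at hi; omega) (Set.left_mem_Icc.mpr hx.le)]
    rw [smul_eq_mul]; ring
  have h2 : 0 ≤ iteratedDerivWithin (m + 1) (fd 0) (Set.Icc x₀ x) x' * (x - x₀) ^ (m + 1) /
      (Nat.factorial (m + 1) : ℝ) := by
    rw [heq (m + 1) le_rfl (Set.Ioo_subset_Icc_self hx')]
    have h3 := hnonneg x' (hsub (Set.Ioo_subset_Icc_self hx'))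
    have h4 : (0:ℝ) < x - x₀ := by linarith [hx]
    positivity
  rw [h1] at hrem
  linarith [hrem ▸ h2]

lemma jg_taylor_lb {n : ℕ} (hn : 0 < n) (hev : Even n) {fd : ℕ → ℝ → ℝ} {s : Set ℝ}
    (hs : IsOpen s) (hord : s.OrdConnected)
    (hderiv : ∀ i < n, ∀ x ∈ s, HasDerivAt (fd i) (fd (i + 1) x) x)
    (hnonneg : ∀ x ∈ s, 0 ≤ fd n x)
    {x₀ x : ℝ} (hx₀ : x₀ ∈ s) (hx : x ∈ s) :
    ∑ i ∈ range n, (x - x₀) ^ i / (Nat.factorial i : ℝ) * fd i x₀ ≤ fd 0 x := by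
  rcases lt_trichotomy x₀ x with h | h | h
  · exact jg_taylor_lb_of_lt hn hs hderiv hnonneg h (hord.out hx₀ hx)
  · subst h
    rw [Finset.sum_eq_single 0 (fun i _ hi => by simp [sub_self, zero_pow hi])
      (fun h => absurd (Finset.mem_range.mpr hn) h)]
    simp
  · set gd : ℕ → ℝ → ℝ := fun i t => (-1 : ℝ) ^ i * fd i (-t) with hgddef
    have hneg : IsOpen ((fun t : ℝ => -t) ⁻¹' s) := hs.preimage continuous_neg
    have hgd : ∀ i < n, ∀ t ∈ (fun t : ℝ => -t) ⁻¹' s, HasDerivAt (gd i) (gd (i + 1) t) t := by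
      intro i hi t ht
      have h1 : HasDerivAt (fun t : ℝ => fd i (-t)) (fd (i + 1) (-t) * (-1)) t :=
        (hderiv i hi (-t) ht).comp t (hasDerivAt_neg t)
      have h2 := h1.const_mul ((-1 : ℝ) ^ i)
      convert h2 using 1
      · rfl
      · rfl
      simp only [hgddef, pow_succ]
      ring
    have hgnn : ∀ t ∈ (fun t : ℝ => -t) ⁻¹' s, 0 ≤ gd n t := fun t ht => by
      simpa [hgddef, hev.neg_one_pow] using hnonneg (-t) ht
    have hsub : Set.Icc (-x₀) (-x) ⊆ (fun t : ℝ => -t) ⁻¹' s := by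
      intro y hy
      obtain ⟨h1, h2⟩ := hy
      show -y ∈ s
      exact hord.out hx hx₀ ⟨by linarith, by linarith⟩
    have key := jg_taylor_lb_of_lt hn hneg hgd hgnn (show -x₀ < -x by linarith) hsub
    have hsum : ∑ i ∈ range n, (x - x₀) ^ i / (Nat.factorial i : ℝ) * fd i x₀ =
        ∑ i ∈ range n, (-x - -x₀) ^ i / (Nat.factorial i : ℝ) * gd i (-x₀) := by
      refine Finset.sum_congr rfl fun i _ => ?_
      simp only [hgddef, neg_neg]
      rw [show (-x - -x₀ : ℝ) = (-1) * (x - x₀) by ring, mul_pow]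
      have hsq : ((-1 : ℝ)) ^ (i * 2) = 1 := by
        rw [mul_comm, pow_mul]
        norm_num
      ring_nf
      rw [hsq]
      ring
    rw [hsum]
    simpa [hgddef] using key

/-- Let `k ≥ 1`, let `f : (a,b) → ℝ` be a `2k`-times differentiable function
(with `i`-th derivative `fd i`, `fd 0 = f`) such that `f^{(2k)}(x) ≥ 0` on `(a,b)`, where
`0 ∈ (a,b)`, and let `X : Ω → (a,b)` be an integrable random variable with `E[X] = 0` such that
`f(X)`, `X^i` and `f^{(i)}(X)·X^i` (`1 ≤ i ≤ 2k−1`) are integrable. Then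
`∑_{i=1}^{2k−1} (1/i!)·f^{(i)}(0)·E[X^i] ≤ E[f(X)] − f(0)
  ≤ −∑_{i=1}^{2k−1} ((−1)^i/i!)·E[f^{(i)}(X)·X^i]`. -/
theorem jensen_gap_higher_order_zero_mean
    {Ω : Type*} [MeasurableSpace Ω] (P : Measure Ω) [IsProbabilityMeasure P]
    (a b : EReal) (hab : a < b) (ha0 : a < ((0 : ℝ) : EReal)) (h0b : ((0 : ℝ) : EReal) < b)
    (k : ℕ) (hk : 0 < k)
    (f : ℝ → ℝ) (fd : ℕ → ℝ → ℝ) (hfd0 : fd 0 = f)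
    (hderiv : ∀ i < 2 * k, ∀ x : ℝ, a < (x : EReal) → (x : EReal) < b →
      HasDerivAt (fd i) (fd (i + 1) x) x)
    (hnonneg : ∀ x : ℝ, a < (x : EReal) → (x : EReal) < b → 0 ≤ fd (2 * k) x)
    (X : Ω → ℝ)
    (hX : ∀ ω, a < (X ω : EReal) ∧ (X ω : EReal) < b)
    (hXint : Integrable X P)
    (hEX : (∫ ω, X ω ∂P) = 0)
    (hfXint : Integrable (fun ω => f (X ω)) P)
    (hmom : ∀ i ∈ Finset.Icc 1 (2 * k - 1), Integrable (fun ω => X ω ^ i) P)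
    (hmom' : ∀ i ∈ Finset.Icc 1 (2 * k - 1),
      Integrable (fun ω => fd i (X ω) * X ω ^ i) P) :
    ∑ i ∈ Finset.Icc 1 (2 * k - 1),
        (1 / (Nat.factorial i : ℝ)) * fd i 0 * (∫ ω, X ω ^ i ∂P)
      ≤ (∫ ω, f (X ω) ∂P) - f 0 ∧
    (∫ ω, f (X ω) ∂P) - f 0
      ≤ -∑ i ∈ Finset.Icc 1 (2 * k - 1),
          ((-1 : ℝ) ^ i / (Nat.factorial i : ℝ)) *
            (∫ ω, fd i (X ω) * X ω ^ i ∂P) := by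
  set s : Set ℝ := {x : ℝ | a < (x : EReal) ∧ (x : EReal) < b} with hsdef
  have hsopen : IsOpen s := isOpen_Ioo.preimage continuous_coe_real_ereal
  have hord : s.OrdConnected := by
    constructor
    intro x hx y hy z hz
    exact ⟨lt_of_lt_of_le hx.1 (EReal.coe_le_coe_iff.mpr hz.1),
      lt_of_le_of_lt (EReal.coe_le_coe_iff.mpr hz.2) hy.2⟩
  have h0s : (0 : ℝ) ∈ s := ⟨ha0, h0b⟩
  have hXs : ∀ ω, X ω ∈ s := fun ω => ⟨(hX ω).1, (hX ω).2⟩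
  have hn : 0 < 2 * k := by omega
  have hev : Even (2 * k) := even_two_mul k
  have hderiv' : ∀ i < 2 * k, ∀ x ∈ s, HasDerivAt (fd i) (fd (i + 1) x) x :=
    fun i hi x hx => hderiv i hi x hx.1 hx.2
  have hnn' : ∀ x ∈ s, 0 ≤ fd (2 * k) x := fun x hx => hnonneg x hx.1 hx.2
  have hsplit : ∀ g : ℕ → ℝ,
      ∑ i ∈ Finset.range (2 * k), g i = g 0 + ∑ i ∈ Finset.Icc 1 (2 * k - 1), g i := by
    intro g
    have h1 : Finset.Icc 1 (2 * k - 1) = Finset.Ico 1 (2 * k) := by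
      rw [← Finset.Ico_add_one_right_eq_Icc]
      congr 1
      omega
    rw [h1, Finset.range_eq_Ico, Finset.sum_eq_sum_Ico_succ_bot hn]
  -- lower bound
  have hlowpt : ∀ ω, f 0 + ∑ i ∈ Finset.Icc 1 (2 * k - 1),
      (fd i 0 / (Nat.factorial i : ℝ)) * X ω ^ i ≤ f (X ω) := by
    intro ω
    have := jg_taylor_lb hn hev hsopen hord hderiv' hnn' h0s (hXs ω)
    rw [hsplit] at this
    simp only [sub_zero, pow_zero, Nat.factorial_zero, hfd0] at this
    calc f 0 + ∑ i ∈ Finset.Icc 1 (2 * k - 1), (fd i 0 / (Nat.factorial i : ℝ)) * X ω ^ i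
        = 1 / (1 : ℝ) * f 0 + ∑ i ∈ Finset.Icc 1 (2 * k - 1),
            X ω ^ i / (Nat.factorial i : ℝ) * fd i 0 := by
          rw [one_div_one, one_mul]
          congr 1
          exact Finset.sum_congr rfl fun i _ => by ring
      _ ≤ f (X ω) := by
          convert this using 2
          norm_num
  have hSlowint : Integrable (fun ω => ∑ i ∈ Finset.Icc 1 (2 * k - 1),
      (fd i 0 / (Nat.factorial i : ℝ)) * X ω ^ i) P :=
    integrable_finset_sum _ fun i hi => (hmom i hi).const_mul _
  have hlowint := integral_mono ((integrable_const (f 0)).add hSlowint) hfXint hlowpt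
  simp only [Pi.add_apply] at hlowint
  rw [integral_add (integrable_const _) hSlowint, integral_const,
    integral_finset_sum _ (fun i hi => (hmom i hi).const_mul _)] at hlowint
  simp only [measure_univ, probReal_univ, ENNReal.toReal_one, smul_eq_mul, one_mul] at hlowint
  simp only [integral_const_mul] at hlowint
  -- upper bound
  have huppt : ∀ ω, f (X ω) + ∑ i ∈ Finset.Icc 1 (2 * k - 1),
      ((-1 : ℝ) ^ i / (Nat.factorial i : ℝ)) * (fd i (X ω) * X ω ^ i) ≤ f 0 := by
    intro ω
    have := jg_taylor_lb hn hev hsopen hord hderiv' hnn' (hXs ω) h0s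
    rw [hsplit] at this
    simp only [pow_zero, Nat.factorial_zero, hfd0] at this
    calc f (X ω) + ∑ i ∈ Finset.Icc 1 (2 * k - 1),
          ((-1 : ℝ) ^ i / (Nat.factorial i : ℝ)) * (fd i (X ω) * X ω ^ i)
        = 1 / (1 : ℝ) * f (X ω) + ∑ i ∈ Finset.Icc 1 (2 * k - 1),
            (0 - X ω) ^ i / (Nat.factorial i : ℝ) * fd i (X ω) := by
          rw [one_div_one, one_mul]
          congr 1
          refine Finset.sum_congr rfl fun i _ => ?_
          rw [show (0 - X ω : ℝ) = (-1) * X ω by ring, mul_pow]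
          ring
      _ ≤ f 0 := by
          convert this using 2
          norm_num
  have hSupint : Integrable (fun ω => ∑ i ∈ Finset.Icc 1 (2 * k - 1),
      ((-1 : ℝ) ^ i / (Nat.factorial i : ℝ)) * (fd i (X ω) * X ω ^ i)) P :=
    integrable_finset_sum _ fun i hi => (hmom' i hi).const_mul _
  have hupint := integral_mono (hfXint.add hSupint) (integrable_const (f 0)) huppt
  simp only [Pi.add_apply] at hupint
  rw [integral_add hfXint hSupint, integral_const,
    integral_finset_sum _ (fun i hi => (hmom' i hi).const_mul _)] at hupint
  simp only [measure_univ, probReal_univ, ENNReal.toReal_one, smul_eq_mul, one_mul] at hupint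
  simp only [integral_const_mul] at hupint
  constructor
  · have heq : ∑ i ∈ Finset.Icc 1 (2 * k - 1),
        (1 / (Nat.factorial i : ℝ)) * fd i 0 * (∫ ω, X ω ^ i ∂P) =
        ∑ i ∈ Finset.Icc 1 (2 * k - 1),
        fd i 0 / (Nat.factorial i : ℝ) * (∫ ω, X ω ^ i ∂P) :=
      Finset.sum_congr rfl fun i _ => by ring
    rw [heq]
    linarith
  · linarith
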